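/- Let P be a lattice (d,k)-polytope with d ≥ 3 and let u, v be vertices at edge-graph distance δ(d−1,k)+k. Then every edge of P incident to u or to v is {−1,0,1}-valued, i.e., its edge direction vector has all coordinates in {−1,0,1}. -/

import Mathlib

open Set

noncomputable def edgeGraph (d : ℕ) (P : Set (Fin d → ℝ)) : SimpleGraph (Fin d → ℝ) where
  Adj a b := a ≠ b ∧ IsExtreme ℝ P (segment ℝ a b)
  symm := by
    constructor
    intro a b h
    exact ⟨h.1.symm, by rw [segment_symm]; exact h.2⟩
  loopless := by
    constructor
    intro a h
    exact h.1 rfl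

/-- Edge-graph diameter of a polytope, as the sup of pairwise distances between vertices. -/
noncomputable def polyDiam (d : ℕ) (P : Set (Fin d → ℝ)) : ℕ :=
  sSup {n : ℕ | ∃ u ∈ P.extremePoints ℝ, ∃ v ∈ P.extremePoints ℝ,
    (edgeGraph d P).dist u v = n}

/-- A lattice (d,k)-polytope: convex hull of a nonempty finite set of points in {0,…,k}^d. -/
def IsLatticePolytope (d k : ℕ) (P : Set (Fin d → ℝ)) : Prop :=
  ∃ V : Finset (Fin d → ℝ), V.Nonempty ∧
    (∀ x ∈ V, ∀ i, ∃ m : ℕ, m ≤ k ∧ x i = (m : ℝ)) ∧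
    P = convexHull ℝ (V : Set (Fin d → ℝ))

/-- δ(d,k): the largest edge-graph diameter of a lattice (d,k)-polytope. -/
noncomputable def deltaLP (d k : ℕ) : ℕ :=
  sSup {n : ℕ | ∃ P : Set (Fin d → ℝ), IsLatticePolytope d k P ∧ polyDiam d P = n}


lemma mem_extremePoints_mono' {d : ℕ} {P F : Set (Fin d → ℝ)} (hFP : F ⊆ P) {x : Fin d → ℝ}
    (hx : x ∈ P.extremePoints ℝ) (hxF : x ∈ F) : x ∈ F.extremePoints ℝ :=
  ⟨hxF, fun x1 h1 x2 h2 hseg => hx.2 (hFP h1) (hFP h2) hseg⟩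

lemma adj_left_extreme {d : ℕ} {P : Set (Fin d → ℝ)} {a b : Fin d → ℝ}
    (h : (edgeGraph d P).Adj a b) : a ∈ P.extremePoints ℝ := by
  obtain ⟨hne, hsub, hext⟩ := h
  refine ⟨hsub (left_mem_segment ℝ a b), ?_⟩
  intro x1 h1 x2 h2 hopen
  obtain ⟨hx1, hx2⟩ : x1 ∈ segment ℝ a b ∧ x2 ∈ segment ℝ a b := ⟨hext h1 h2 (left_mem_segment ℝ a b) hopen, hext h2 h1 (left_mem_segment ℝ a b) (openSegment_symm ℝ x1 x2 ▸ hopen)⟩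
  rw [segment_eq_image'] at hx1 hx2
  obtain ⟨s, hs, rfl⟩ := hx1
  obtain ⟨t, ht, rfl⟩ := hx2
  obtain ⟨θ1, θ2, hθ1, hθ2, hsum, hcomb⟩ := hopen
  have hba : b - a ≠ 0 := sub_ne_zero.2 (Ne.symm hne)
  have : (θ1 * s + θ2 * t) • (b - a) = 0 := by
    have := hcomb
    rw [smul_add, smul_add, smul_smul, smul_smul] at this
    have h2 : (θ1 + θ2) • a + (θ1 * s + θ2 * t) • (b - a) = a := by
      rw [add_smul, add_smul]; linear_combination (norm := module) this
    rw [hsum, one_smul] at h2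
    linear_combination (norm := module) h2
  have hcoef : θ1 * s + θ2 * t = 0 := by
    rcases smul_eq_zero.1 this with h | h
    · exact h
    · exact absurd h hba
  have hs0 : s = 0 := by nlinarith [hs.1, hs.2, ht.1, ht.2]
  have ht0 : t = 0 := by nlinarith [hs.1, hs.2, ht.1, ht.2]
  simp [hs0, ht0]

lemma adj_right_extreme {d : ℕ} {P : Set (Fin d → ℝ)} {a b : Fin d → ℝ}
    (h : (edgeGraph d P).Adj a b) : b ∈ P.extremePoints ℝ :=
  adj_left_extreme h.symm


section Face
variable {d : ℕ} {V : Finset (Fin d → ℝ)} {f : (Fin d → ℝ) →L[ℝ] ℝ} {M : ℝ}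

lemma hull_le_of_le (hM : ∀ y ∈ V, f y ≤ M) :
    ∀ z ∈ convexHull ℝ (V : Set (Fin d → ℝ)), f z ≤ M := by
  intro z hz
  have h : convexHull ℝ (V : Set (Fin d → ℝ)) ⊆ {w | f w ≤ M} :=
    convexHull_min (fun y hy => hM y hy) (convex_halfSpace_le f.toLinearMap.isLinear M)
  exact h hz

lemma face_isExtreme (hM : ∀ y ∈ V, f y ≤ M) :
    IsExtreme ℝ (convexHull ℝ (V : Set (Fin d → ℝ)))
      {z ∈ convexHull ℝ (V : Set (Fin d → ℝ)) | f z = M} := by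
  constructor
  · exact fun z hz => hz.1
  · intro x1 h1 x2 h2 x hx hopen
    obtain ⟨θ1, θ2, hθ1, hθ2, hsum, hcomb⟩ := hopen
    have hfx : θ1 * f x1 + θ2 * f x2 = M := by
      have := hx.2
      rw [← hcomb] at this
      simpa [map_add, map_smul, smul_eq_mul] using this
    have l1 : f x1 ≤ M := hull_le_of_le hM x1 h1
    have l2 : f x2 ≤ M := hull_le_of_le hM x2 h2
    have hMM : (θ1 + θ2) * M = M := by rw [hsum, one_mul]
    have key : ∀ y1 y2 : ℝ, y1 ≤ M → y2 ≤ M → θ1 * y1 + θ2 * y2 = M → y1 = M := by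
      intro y1 y2 l1' l2' heq
      by_contra h
      have h1' : θ1 * y1 < θ1 * M := mul_lt_mul_of_pos_left (lt_of_le_of_ne l1' h) hθ1
      have h2' : θ2 * y2 ≤ θ2 * M := mul_le_mul_of_nonneg_left l2' hθ2.le
      nlinarith
    have e1 : f x1 = M := key _ _ l1 l2 hfx
    have key2 : ∀ y1 y2 : ℝ, y1 ≤ M → y2 ≤ M → θ1 * y1 + θ2 * y2 = M → y2 = M := by
      intro y1 y2 l1' l2' heq
      by_contra h
      have h1' : θ2 * y2 < θ2 * M := mul_lt_mul_of_pos_left (lt_of_le_of_ne l2' h) hθ2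
      have h2' : θ1 * y1 ≤ θ1 * M := mul_le_mul_of_nonneg_left l1' hθ1.le
      nlinarith
    have e2 : f x2 = M := key2 _ _ l1 l2 hfx
    exact ⟨h1, e1⟩

open Finset in
lemma face_hull_eq (hM : ∀ y ∈ V, f y ≤ M) :
    {z ∈ convexHull ℝ (V : Set (Fin d → ℝ)) | f z = M} =
      convexHull ℝ ((V.filter (fun y => f y = M)) : Set (Fin d → ℝ)) := by
  classical
  apply Set.Subset.antisymm
  · rintro z ⟨hz, hfz⟩
    rw [Finset.convexHull_eq] at hz
    obtain ⟨w, hw0, hw1, hwz⟩ := hz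
    have hcm : ∑ y ∈ V, w y • y = z := by
      rw [← hwz, Finset.centerMass_eq_of_sum_1 _ _ hw1]; rfl
    have hfsum : ∑ y ∈ V, w y * f y = M := by
      rw [← hfz, ← hcm]
      simp [map_sum, map_smul, smul_eq_mul]
    have hkey : ∀ y ∈ V, w y ≠ 0 → f y = M := by
      intro y0 hy0 hwy0
      by_contra hne
      have hlt : f y0 < M := lt_of_le_of_ne (hM y0 hy0) hne
      have hwpos : 0 < w y0 := lt_of_le_of_ne (hw0 y0 hy0) (Ne.symm hwy0)
      have : ∑ y ∈ V, w y * f y < ∑ y ∈ V, w y * M := by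
        apply Finset.sum_lt_sum
        · intro i hi
          exact mul_le_mul_of_nonneg_left (hM i hi) (hw0 i hi)
        · exact ⟨y0, hy0, by nlinarith⟩
      rw [← Finset.sum_mul, hw1, one_mul, hfsum] at this
      exact lt_irrefl _ this
    have hz' : z = (V.filter fun y => w y ≠ 0).centerMass w id := by
      rw [← hwz, Finset.centerMass_filter_ne_zero]
    have hsub : (V.filter fun y => w y ≠ 0) ⊆ V.filter (fun y => f y = M) := by
      intro y hy
      rw [Finset.mem_filter] at hy ⊢
      exact ⟨hy.1, hkey y hy.1 hy.2⟩
    have hmem : z ∈ convexHull ℝ ((V.filter fun y => w y ≠ 0 : Finset _) : Set (Fin d → ℝ)) := by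
      rw [hz']
      apply Finset.centerMass_id_mem_convexHull
      · intro i hi; exact hw0 i (Finset.mem_filter.1 hi).1
      · rw [Finset.sum_filter_ne_zero, hw1]; exact one_pos
    exact convexHull_mono (Finset.coe_subset.2 hsub) hmem
  · apply convexHull_min
    · intro y hy
      rw [Finset.mem_coe, Finset.mem_filter] at hy
      exact ⟨subset_convexHull ℝ _ (by exact_mod_cast hy.1), hy.2⟩
    · exact (convex_convexHull ℝ _).inter (convex_hyperplane f.toLinearMap.isLinear M)


lemma not_mem_hull_erase {d : ℕ} {V : Finset (Fin d → ℝ)} {x : Fin d → ℝ}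
    (hx : x ∈ (convexHull ℝ (V : Set (Fin d → ℝ))).extremePoints ℝ) :
    x ∉ convexHull ℝ ((V.erase x : Finset (Fin d → ℝ)) : Set (Fin d → ℝ)) := by
  classical
  intro hmem
  have hsub : convexHull ℝ ((V.erase x : Finset (Fin d → ℝ)) : Set (Fin d → ℝ)) ⊆
      convexHull ℝ (V : Set (Fin d → ℝ)) :=
    convexHull_mono (by exact_mod_cast Finset.erase_subset x V)
  have := extremePoints_convexHull_subset (mem_extremePoints_mono' hsub hx hmem)
  simp at this

lemma exists_exposing {d : ℕ} {V : Finset (Fin d → ℝ)} {x : Fin d → ℝ}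
    (hx : x ∈ (convexHull ℝ (V : Set (Fin d → ℝ))).extremePoints ℝ) :
    ∃ g : (Fin d → ℝ) →L[ℝ] ℝ, ∀ y ∈ V, y ≠ x → g y < g x := by
  classical
  have hnm := not_mem_hull_erase hx
  have hcl : IsClosed (convexHull ℝ ((V.erase x : Finset (Fin d → ℝ)) : Set (Fin d → ℝ))) :=
    ((V.erase x).finite_toSet.isCompact_convexHull ℝ).isClosed
  obtain ⟨g, u, hgu, hux⟩ := geometric_hahn_banach_closed_point
    (convex_convexHull ℝ _) hcl hnm
  refine ⟨g, fun y hy hyx => ?_⟩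
  have : y ∈ convexHull ℝ ((V.erase x : Finset (Fin d → ℝ)) : Set (Fin d → ℝ)) :=
    subset_convexHull ℝ _ (by exact_mod_cast Finset.mem_erase.2 ⟨hyx, hy⟩)
  exact lt_trans (hgu y this) hux

noncomputable def dotCLM {d : ℕ} (c : Fin d → ℝ) : (Fin d → ℝ) →L[ℝ] ℝ :=
  ∑ j, c j • (ContinuousLinearMap.proj j : (Fin d → ℝ) →L[ℝ] ℝ)

lemma dotCLM_apply {d : ℕ} (c x : Fin d → ℝ) : dotCLM c x = ∑ j, c j * x j := by
  simp [dotCLM, ContinuousLinearMap.sum_apply, ContinuousLinearMap.proj_apply, smul_eq_mul]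

lemma dot_self_ne_zero {d : ℕ} {a : Fin d → ℝ} (ha : a ≠ 0) : ∑ j, a j * a j ≠ 0 := by
  intro h
  apply ha
  funext j
  have := (Finset.sum_eq_zero_iff_of_nonneg (fun i _ => mul_self_nonneg (a i))).1 h j
    (Finset.mem_univ j)
  have : a j = 0 := by nlinarith [this]
  simpa using this

lemma exists_generic {d : ℕ} (S : Finset (Fin d → ℝ)) (hS : ∀ v ∈ S, v ≠ 0) :
    ∃ c : Fin d → ℝ, ∀ v ∈ S, dotCLM c v ≠ 0 := by
  classical
  induction S using Finset.induction with
  | empty => exact ⟨0, by simp⟩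
  | @insert a S ha ih =>
    obtain ⟨c, hc⟩ := ih (fun v hv => hS v (Finset.mem_insert_of_mem hv))
    have hane : a ≠ 0 := hS a (Finset.mem_insert_self a S)
    set dot : (Fin d → ℝ) → (Fin d → ℝ) → ℝ := fun p q => ∑ j, p j * q j with hdot
    have haa : dot a a ≠ 0 := dot_self_ne_zero hane
    set bad : (Fin d → ℝ) → ℝ := fun v => -(dot c v) / (dot a v) with hbad
    obtain ⟨t, ht⟩ := Finset.exists_notMem ((insert a S).image bad)
    refine ⟨c + t • a, ?_⟩
    intro v hv
    have hexp : dotCLM (c + t • a) v = dot c v + t * dot a v := by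
      rw [dotCLM_apply]
      simp only [hdot, Pi.add_apply, Pi.smul_apply, smul_eq_mul, Finset.mul_sum]
      rw [← Finset.sum_add_distrib]
      congr 1; funext j; ring
    rw [hexp]
    by_cases hav : dot a v = 0
    · have hva : v ≠ a := fun h => haa (h ▸ hav)
      have hvS : v ∈ S := (Finset.mem_insert.1 hv).resolve_left hva
      have h2 := hc v hvS
      rw [dotCLM_apply] at h2
      rw [hav, mul_zero, add_zero]
      exact h2
    · intro hzero
      apply ht
      refine Finset.mem_image.2 ⟨v, hv, ?_⟩
      rw [hbad]
      field_simp
      linarith [hzero]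


lemma exists_segment_hull {d : ℕ} (T : Finset (Fin d → ℝ)) (x u : Fin d → ℝ) (hxT : x ∈ T)
    (μ : (Fin d → ℝ) → ℝ) (hμ : ∀ z ∈ T, z = x + μ z • u ∧ 0 ≤ μ z) :
    ∃ y ∈ T, convexHull ℝ (T : Set (Fin d → ℝ)) = segment ℝ x y ∧ ∀ z ∈ T, μ z ≤ μ y := by
  classical
  obtain ⟨y, hyT, hymax⟩ := T.exists_max_image μ ⟨x, hxT⟩
  refine ⟨y, hyT, ?_, hymax⟩
  apply Set.Subset.antisymm
  · apply convexHull_min ?_ (convex_segment x y)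
    · intro z hz
      rw [Finset.mem_coe] at hz
      obtain ⟨hzeq, hz0⟩ := hμ z hz
      obtain ⟨hyeq, hy0⟩ := hμ y hyT
      by_cases hy0' : μ y = 0
      · have hz0' : μ z = 0 := le_antisymm (hy0' ▸ hymax z hz) hz0
        have : z = x := by rw [hzeq, hz0']; simp
        rw [this]
        exact left_mem_segment ℝ x y
      · have hyx : y - x = μ y • u := by nth_rewrite 1 [hyeq]; abel
        have hzx : x + (μ z / μ y) • (y - x) = z := by
          rw [hyx, smul_smul, div_mul_cancel₀ _ hy0']; exact hzeq.symm
        rw [segment_eq_image']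
        exact ⟨μ z / μ y, ⟨div_nonneg hz0 hy0, div_le_one_of_le₀ (hymax z hz) hy0⟩, hzx⟩
  · rw [← convexHull_pair]
    exact convexHull_mono (by
      intro w hw
      rcases hw with h | h
      · exact Finset.mem_coe.2 (h ▸ hxT)
      · exact Finset.mem_coe.2 (h ▸ hyT))


set_option maxHeartbeats 2000000 in
lemma pivot {d : ℕ} {V : Finset (Fin d → ℝ)} {x : Fin d → ℝ}
    (hx : x ∈ (convexHull ℝ (V : Set (Fin d → ℝ))).extremePoints ℝ)
    (f : (Fin d → ℝ) →L[ℝ] ℝ) {p : Fin d → ℝ} (hp : p ∈ V) (hfp : f x < f p) :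
    ∃ y ∈ V, (edgeGraph d (convexHull ℝ (V : Set (Fin d → ℝ)))).Adj x y ∧ f x < f y := by
  classical
  have hxV : x ∈ V := extremePoints_convexHull_subset hx
  obtain ⟨g, hg⟩ := exists_exposing hx
  set S1 : Finset (Fin d → ℝ) := V.erase x with hS1
  have hpx : p ≠ x := fun h => absurd (h ▸ hfp) (lt_irrefl _)
  have hpS1 : p ∈ S1 := Finset.mem_erase.2 ⟨hpx, hp⟩
  have hS1ne : S1.Nonempty := ⟨p, hpS1⟩
  have hgS1 : ∀ y ∈ S1, 0 < g x - g y := by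
    intro y hy
    have := hg y (Finset.mem_erase.1 hy).2 (Finset.mem_erase.1 hy).1
    linarith
  set R : (Fin d → ℝ) → ℝ := fun y => (f y - f x) / (g x - g y) with hR
  set t1 : ℝ := (S1.image R).max' (hS1ne.image R) with ht1
  have ht1ge : ∀ y ∈ S1, R y ≤ t1 := fun y hy =>
    Finset.le_max' _ _ (Finset.mem_image_of_mem R hy)
  have ht1pos : 0 < t1 :=
    lt_of_lt_of_le (div_pos (by linarith) (hgS1 p hpS1)) (ht1ge p hpS1)
  set h1 : (Fin d → ℝ) →L[ℝ] ℝ := f + t1 • g with hh1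
  have h1app : ∀ z, h1 z = f z + t1 * g z := fun z => rfl
  have hmax1 : ∀ y ∈ V, h1 y ≤ h1 x := by
    intro y hy
    by_cases hyx : y = x
    · rw [hyx]
    · have hyS1 : y ∈ S1 := Finset.mem_erase.2 ⟨hyx, hy⟩
      have hden := hgS1 y hyS1
      have := ht1ge y hyS1
      rw [hR] at this
      rw [div_le_iff₀ hden] at this
      rw [h1app, h1app]
      linarith
  set T1 : Finset (Fin d → ℝ) := V.filter (fun y => h1 y = h1 x) with hT1
  have hxT1 : x ∈ T1 := Finset.mem_filter.2 ⟨hxV, rfl⟩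
  have hF1 : {z ∈ convexHull ℝ (V : Set (Fin d → ℝ)) | h1 z = h1 x} =
      convexHull ℝ (T1 : Set (Fin d → ℝ)) := face_hull_eq hmax1
  have hF1ext : IsExtreme ℝ (convexHull ℝ (V : Set (Fin d → ℝ)))
      (convexHull ℝ (T1 : Set (Fin d → ℝ))) := hF1 ▸ face_isExtreme hmax1
  have hT1f : ∀ y ∈ T1, y ≠ x → f x < f y := by
    intro y hy hyx
    have h1y : h1 y = h1 x := (Finset.mem_filter.1 hy).2
    have hyS1 : y ∈ S1 := Finset.mem_erase.2 ⟨hyx, (Finset.mem_filter.1 hy).1⟩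
    have hden := hgS1 y hyS1
    rw [h1app, h1app] at h1y
    nlinarith
  have hT1V : T1 ⊆ V := Finset.filter_subset _ _
  -- stage 2
  set S2 : Finset (Fin d → ℝ) := T1.erase x with hS2
  obtain ⟨y1, hy1S1, hy1R⟩ : ∃ y1 ∈ S1, R y1 = t1 := by
    have := (S1.image R).max'_mem (hS1ne.image R)
    rw [← ht1] at this
    obtain ⟨y1, hy1, hy1eq⟩ := Finset.mem_image.1 this
    exact ⟨y1, hy1, hy1eq⟩
  have hy1T1 : y1 ∈ T1 := by
    refine Finset.mem_filter.2 ⟨(Finset.mem_erase.1 hy1S1).2, ?_⟩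
    have hden := hgS1 y1 hy1S1
    rw [h1app, h1app]
    have : (f y1 - f x) / (g x - g y1) = t1 := hy1R
    rw [div_eq_iff (ne_of_gt hden)] at this
    linarith
  have hy1S2 : y1 ∈ S2 := Finset.mem_erase.2 ⟨(Finset.mem_erase.1 hy1S1).1, hy1T1⟩
  set wvec : (Fin d → ℝ) → (Fin d → ℝ) → (Fin d → ℝ) :=
    fun y z => (g x - g z) • (y - x) - (g x - g y) • (z - x) with hwvec
  set avoid : Finset (Fin d → ℝ) :=
    ((S2 ×ˢ S2).image (fun yz => wvec yz.1 yz.2)).filter (fun v => v ≠ 0) ∪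
      S2.image (fun y => y - x) with havoid
  have havne : ∀ v ∈ avoid, v ≠ 0 := by
    intro v hv
    rcases Finset.mem_union.1 hv with h | h
    · exact (Finset.mem_filter.1 h).2
    · obtain ⟨y, hy, hyeq⟩ := Finset.mem_image.1 h
      have hyx : y ≠ x := (Finset.mem_erase.1 (by
        have : y ∈ S2 := hy
        rwa [hS2] at this)).1
      rw [← hyeq]
      exact sub_ne_zero.2 hyx
  obtain ⟨c, hc⟩ := exists_generic avoid havne
  have hgeneric : ∀ y ∈ S2, ∀ z ∈ S2, wvec y z ≠ 0 → dotCLM c (wvec y z) ≠ 0 := by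
    intro y hy z hz hne
    exact hc _ (Finset.mem_union_left _ (Finset.mem_filter.2
      ⟨Finset.mem_image.2 ⟨(y, z), Finset.mem_product.2 ⟨hy, hz⟩, rfl⟩, hne⟩))
  have hgy : ∀ y ∈ S2, dotCLM c (y - x) ≠ 0 :=
    fun y hy => hc _ (Finset.mem_union_right _ (Finset.mem_image.2 ⟨y, hy, rfl⟩))
  -- choose sign
  set ε : ℝ := if 0 < dotCLM c (y1 - x) then 1 else -1 with hε
  set f0 : (Fin d → ℝ) →L[ℝ] ℝ := ε • dotCLM c with hf0
  have hf0app : ∀ z, f0 z = ε * dotCLM c z := fun z => rfl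
  have hf0y1 : 0 < f0 (y1 - x) := by
    rw [hf0app, hε]
    rcases lt_trichotomy (dotCLM c (y1 - x)) 0 with h | h | h
    · rw [if_neg (by linarith)]; linarith
    · exact absurd h (hgy y1 hy1S2)
    · rw [if_pos h]; linarith
  have hf0w : ∀ y ∈ S2, ∀ z ∈ S2, f0 (wvec y z) = 0 → wvec y z = 0 := by
    intro y hy z hz hzero
    by_contra hne
    apply hgeneric y hy z hz hne
    rw [hf0app] at hzero
    have hεne : ε ≠ 0 := by
      rw [hε]; split <;> norm_num
    exact (mul_eq_zero.1 hzero).resolve_left hεne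
  set S0 : Finset (Fin d → ℝ) := S2.filter (fun y => 0 < f0 (y - x)) with hS0
  have hy1S0 : y1 ∈ S0 := Finset.mem_filter.2 ⟨hy1S2, hf0y1⟩
  have hS0ne : S0.Nonempty := ⟨y1, hy1S0⟩
  set s : (Fin d → ℝ) → ℝ := fun y => f0 (y - x) / (g x - g y) with hs
  set t2 : ℝ := (S0.image s).max' (hS0ne.image s) with ht2
  have hS0S1 : ∀ y ∈ S0, y ∈ S1 := by
    intro y hy
    have h2 := Finset.mem_erase.1 (Finset.mem_filter.1 hy).1
    exact Finset.mem_erase.2 ⟨h2.1, hT1V h2.2⟩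
  have ht2ge : ∀ y ∈ S0, s y ≤ t2 := fun y hy =>
    Finset.le_max' _ _ (Finset.mem_image_of_mem s hy)
  have ht2pos : 0 < t2 := by
    refine lt_of_lt_of_le ?_ (ht2ge y1 hy1S0)
    exact div_pos hf0y1 (hgS1 y1 hy1S1)
  set h2 : (Fin d → ℝ) →L[ℝ] ℝ := f0 + t2 • g with hh2
  have h2app : ∀ z, h2 z = f0 z + t2 * g z := fun z => rfl
  have hmax2 : ∀ y ∈ T1, h2 y ≤ h2 x := by
    intro y hy
    by_cases hyx : y = x
    · rw [hyx]
    · have hyS2 : y ∈ S2 := Finset.mem_erase.2 ⟨hyx, hy⟩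
      have hyS1 : y ∈ S1 := Finset.mem_erase.2 ⟨hyx, hT1V hy⟩
      have hden := hgS1 y hyS1
      rw [h2app, h2app]
      have hfd : f0 y - f0 x = f0 (y - x) := by rw [map_sub]
      by_cases hyS0 : y ∈ S0
      · have := ht2ge y hyS0
        rw [hs] at this
        rw [div_le_iff₀ hden] at this
        have hexp : f0 (y - x) ≤ t2 * (g x - g y) := this
        rw [map_sub] at hexp
        linarith
      · have : ¬ (0 < f0 (y - x)) := fun h => hyS0 (Finset.mem_filter.2 ⟨hyS2, h⟩)
        push_neg at this
        rw [map_sub] at this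
        nlinarith
  set T2 : Finset (Fin d → ℝ) := T1.filter (fun y => h2 y = h2 x) with hT2
  have hxT2 : x ∈ T2 := Finset.mem_filter.2 ⟨hxT1, rfl⟩
  have hF2 : {z ∈ convexHull ℝ (T1 : Set (Fin d → ℝ)) | h2 z = h2 x} =
      convexHull ℝ (T2 : Set (Fin d → ℝ)) := face_hull_eq hmax2
  have hF2ext : IsExtreme ℝ (convexHull ℝ (T1 : Set (Fin d → ℝ)))
      (convexHull ℝ (T2 : Set (Fin d → ℝ))) := hF2 ▸ face_isExtreme hmax2
  -- members of T2 minus x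
  have hT2mem : ∀ z ∈ T2, z ≠ x → z ∈ S0 ∧ s z = t2 := by
    intro z hz hzx
    obtain ⟨hzT1, hzh2⟩ := Finset.mem_filter.1 hz
    have hzS2 : z ∈ S2 := Finset.mem_erase.2 ⟨hzx, hzT1⟩
    have hzS1 : z ∈ S1 := Finset.mem_erase.2 ⟨hzx, hT1V hzT1⟩
    have hden := hgS1 z hzS1
    rw [h2app, h2app] at hzh2
    have hval : f0 (z - x) = t2 * (g x - g z) := by
      rw [map_sub]; linarith
    have hpos : 0 < f0 (z - x) := by rw [hval]; exact mul_pos ht2pos hden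
    refine ⟨Finset.mem_filter.2 ⟨hzS2, hpos⟩, ?_⟩
    have hsz : s z = f0 (z - x) / (g x - g z) := rfl
    rw [hsz, hval]
    field_simp
  -- colinearity
  obtain ⟨y2, hy2S0, hy2s⟩ : ∃ y2 ∈ S0, s y2 = t2 := by
    have := (S0.image s).max'_mem (hS0ne.image s)
    rw [← ht2] at this
    obtain ⟨y2, hy2, hy2eq⟩ := Finset.mem_image.1 this
    exact ⟨y2, hy2, hy2eq⟩
  have hy2T2 : y2 ∈ T2 := by
    have hy2S2 : y2 ∈ S2 := (Finset.mem_filter.1 hy2S0).1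
    have hy2S1 : y2 ∈ S1 := hS0S1 y2 hy2S0
    have hden := hgS1 y2 hy2S1
    refine Finset.mem_filter.2 ⟨(Finset.mem_erase.1 hy2S2).2, ?_⟩
    rw [h2app, h2app]
    have : f0 (y2 - x) / (g x - g y2) = t2 := hy2s
    rw [div_eq_iff (ne_of_gt hden)] at this
    rw [map_sub] at this
    linarith
  have hy2x : y2 ≠ x := (Finset.mem_erase.1 (Finset.mem_filter.1 hy2S0).1).1
  set u : Fin d → ℝ := y2 - x with hu
  set μ : (Fin d → ℝ) → ℝ := fun z => if z = x then 0 else (g x - g z) / (g x - g y2) with hμdef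
  have hcol : ∀ z ∈ T2, z = x + μ z • u ∧ 0 ≤ μ z := by
    intro z hz
    by_cases hzx : z = x
    · rw [hμdef]; simp [hzx]
    · obtain ⟨hzS0, hzs⟩ := hT2mem z hz hzx
      have hzS2 : z ∈ S2 := (Finset.mem_filter.1 hzS0).1
      have hy2S2 : y2 ∈ S2 := (Finset.mem_filter.1 hy2S0).1
      have hzS1 : z ∈ S1 := hS0S1 z hzS0
      have hy2S1 : y2 ∈ S1 := hS0S1 y2 hy2S0
      have hdz := hgS1 z hzS1
      have hdy2 := hgS1 y2 hy2S1
      -- s z = s y2 = t2  ⇒  f0 (wvec z y2) = 0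
      have hszy : f0 (z - x) * (g x - g y2) = f0 (y2 - x) * (g x - g z) := by
        have h1' : f0 (z - x) = t2 * (g x - g z) := by
          rw [hs] at hzs
          rw [div_eq_iff (ne_of_gt hdz)] at hzs
          linarith [hzs]
        have h2' : f0 (y2 - x) = t2 * (g x - g y2) := by
          rw [hs] at hy2s
          rw [div_eq_iff (ne_of_gt hdy2)] at hy2s
          linarith [hy2s]
        rw [h1', h2']; ring
      have hwz : f0 (wvec z y2) = 0 := by
        have hszy' : (f0 z - f0 x) * (g x - g y2) = (f0 y2 - f0 x) * (g x - g z) := by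
          simpa [map_sub] using hszy
        rw [hwvec]
        simp only [map_sub, map_smul, smul_eq_mul]
        linear_combination hszy'
      have hw0 : wvec z y2 = 0 := hf0w z hzS2 y2 hy2S2 hwz
      rw [hwvec] at hw0
      have hrel : (g x - g y2) • (z - x) = (g x - g z) • (y2 - x) := by
        have h0 : (g x - g y2) • (z - x) - (g x - g z) • (y2 - x) = 0 := hw0
        exact sub_eq_zero.1 h0
      have hzeq : μ z • u = z - x := by
        rw [hμdef]
        simp only [if_neg hzx]
        rw [hu, div_eq_inv_mul, ← smul_smul, ← hrel, smul_smul,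
          inv_mul_cancel₀ (ne_of_gt hdy2), one_smul]
      constructor
      · rw [hzeq]; abel
      · rw [hμdef]; simp only [if_neg hzx]
        exact div_nonneg hdz.le hdy2.le
  obtain ⟨ystar, hyT2, hhull, hmaxμ⟩ := exists_segment_hull T2 x u hxT2 μ hcol
  have hμy2 : μ y2 = 1 := by
    rw [hμdef]
    simp only [if_neg hy2x]
    exact div_self (ne_of_gt (hgS1 y2 (hS0S1 y2 hy2S0)))
  have hyx : ystar ≠ x := by
    intro h
    have h0 : μ ystar = 0 := by rw [hμdef]; simp [h]
    have := hmaxμ y2 hy2T2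
    rw [hμy2, h0] at this
    linarith
  have hseg2 : IsExtreme ℝ (convexHull ℝ (T1 : Set (Fin d → ℝ))) (segment ℝ x ystar) := by
    rw [← hhull]
    exact hF2ext
  have hext : IsExtreme ℝ (convexHull ℝ (V : Set (Fin d → ℝ))) (segment ℝ x ystar) :=
    hF1ext.trans hseg2
  have hyT1 : ystar ∈ T1 := (Finset.mem_filter.1 hyT2).1
  exact ⟨ystar, hT1V hyT1, ⟨fun h => hyx h.symm, hext⟩, hT1f ystar hyT1 hyx⟩


lemma walk_to_exposed {d : ℕ} {V : Finset (Fin d → ℝ)} (g : (Fin d → ℝ) →L[ℝ] ℝ)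
    {z' : Fin d → ℝ} (hz' : z' ∈ (convexHull ℝ (V : Set (Fin d → ℝ))).extremePoints ℝ)
    (hgexp : ∀ y ∈ V, y ≠ z' → g y < g z') :
    ∀ x, x ∈ (convexHull ℝ (V : Set (Fin d → ℝ))).extremePoints ℝ →
      Nonempty ((edgeGraph d (convexHull ℝ (V : Set (Fin d → ℝ)))).Walk x z') := by
  classical
  have hz'V : z' ∈ V := extremePoints_convexHull_subset hz'
  suffices H : ∀ N : ℕ, ∀ x, x ∈ (convexHull ℝ (V : Set (Fin d → ℝ))).extremePoints ℝ →
      (V.filter (fun y => g x < g y)).card ≤ N →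
      Nonempty ((edgeGraph d (convexHull ℝ (V : Set (Fin d → ℝ)))).Walk x z') by
    intro x hx
    exact H _ x hx le_rfl
  intro N
  induction N with
  | zero =>
    intro x hx hcard
    by_cases hxz : x = z'
    · exact ⟨hxz ▸ SimpleGraph.Walk.nil⟩
    · exfalso
      have hxV : x ∈ V := extremePoints_convexHull_subset hx
      have : g x < g z' := hgexp x hxV hxz
      have hmem : z' ∈ V.filter (fun y => g x < g y) := Finset.mem_filter.2 ⟨hz'V, this⟩
      have := Finset.card_pos.2 ⟨z', hmem⟩
      omega
  | succ N ih =>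
    intro x hx hcard
    by_cases hxz : x = z'
    · exact ⟨hxz ▸ SimpleGraph.Walk.nil⟩
    · have hxV : x ∈ V := extremePoints_convexHull_subset hx
      obtain ⟨y, hyV, hadj, hgy⟩ := pivot hx g hz'V (hgexp x hxV hxz)
      have hyx : y ∈ (convexHull ℝ (V : Set (Fin d → ℝ))).extremePoints ℝ :=
        adj_right_extreme hadj
      have hss : V.filter (fun w => g y < g w) ⊂ V.filter (fun w => g x < g w) := by
        refine Finset.ssubset_iff_of_subset ?_ |>.2 ?_
        · intro w hw
          rw [Finset.mem_filter] at hw ⊢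
          exact ⟨hw.1, lt_trans hgy hw.2⟩
        · exact ⟨y, Finset.mem_filter.2 ⟨hyV, hgy⟩, by
            intro hmem
            have := (Finset.mem_filter.1 hmem).2
            exact lt_irrefl _ this⟩
      have hcard' : (V.filter (fun w => g y < g w)).card ≤ N := by
        have := Finset.card_lt_card hss
        omega
      obtain ⟨w⟩ := ih y hyx hcard'
      exact ⟨SimpleGraph.Walk.cons hadj w⟩

lemma walk_up {d k : ℕ} {V : Finset (Fin d → ℝ)} (i : Fin d)
    (hlat : ∀ y ∈ V, ∃ m : ℕ, m ≤ k ∧ y i = (m : ℝ)) {M : ℝ}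
    (hM : ∀ y ∈ V, y i ≤ M) (hMmem : ∃ y ∈ V, y i = M) :
    ∀ N : ℕ, ∀ x, x ∈ (convexHull ℝ (V : Set (Fin d → ℝ))).extremePoints ℝ →
      M - x i ≤ (N : ℝ) →
      ∃ z, z ∈ (convexHull ℝ (V : Set (Fin d → ℝ))).extremePoints ℝ ∧ z i = M ∧
        ∃ w : (edgeGraph d (convexHull ℝ (V : Set (Fin d → ℝ)))).Walk x z,
          (w.length : ℝ) ≤ M - x i := by
  classical
  intro N
  induction N with
  | zero =>
    intro x hx hfuel
    have hxV : x ∈ V := extremePoints_convexHull_subset hx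
    have hle : x i ≤ M := hM x hxV
    have : x i = M := by push_cast at hfuel; linarith
    exact ⟨x, hx, this, SimpleGraph.Walk.nil, by simp [this]⟩
  | succ N ih =>
    intro x hx hfuel
    have hxV : x ∈ V := extremePoints_convexHull_subset hx
    by_cases hxi : x i = M
    · exact ⟨x, hx, hxi, SimpleGraph.Walk.nil, by simp [hxi]⟩
    · have hxlt : x i < M := lt_of_le_of_ne (hM x hxV) hxi
      obtain ⟨p, hpV, hpM⟩ := hMmem
      have hpi : x i < p i := by rw [hpM]; exact hxlt
      obtain ⟨y, hyV, hadj, hgy⟩ := pivot hx (ContinuousLinearMap.proj i) hpV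
        (by simpa using hpi)
      have hyext := adj_right_extreme hadj
      obtain ⟨mx, hmxk, hmx⟩ := hlat x hxV
      obtain ⟨my, hmyk, hmy⟩ := hlat y hyV
      have hstep : x i + 1 ≤ y i := by
        have h1 : (mx : ℝ) < my := by
          rw [← hmx, ← hmy]
          simpa using hgy
        have h2 : mx < my := by exact_mod_cast h1
        have h3 : (mx : ℝ) + 1 ≤ my := by exact_mod_cast h2
        rw [hmx, hmy]
        linarith
      have hfuel' : M - y i ≤ (N : ℝ) := by push_cast at hfuel ⊢; linarith
      obtain ⟨z, hz, hzM, w, hw⟩ := ih y hyext hfuel'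
      refine ⟨z, hz, hzM, SimpleGraph.Walk.cons hadj w, ?_⟩
      simp only [SimpleGraph.Walk.length_cons]
      push_cast
      linarith


lemma walk_support_extreme {d : ℕ} {P : Set (Fin d → ℝ)} {a b : Fin d → ℝ}
    (ha : a ∈ P.extremePoints ℝ) (p : (edgeGraph d P).Walk a b) :
    ∀ w ∈ p.support, w ∈ P.extremePoints ℝ := by
  induction p with
  | nil => intro w hw; simp at hw; exact hw ▸ ha
  | cons h p ih =>
    intro w hw
    rw [SimpleGraph.Walk.support_cons] at hw
    rcases List.mem_cons.1 hw with h' | h'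
    · exact h' ▸ ha
    · exact ih (adj_right_extreme h) w h'

lemma card_lattice_le {d k : ℕ} (V : Finset (Fin d → ℝ))
    (hlat : ∀ x ∈ V, ∀ i, ∃ m : ℕ, m ≤ k ∧ x i = (m : ℝ)) : V.card ≤ (k + 1) ^ d := by
  classical
  set φ : (Fin d → ℝ) → (Fin d → Fin (k + 1)) := fun x i =>
    if h : ∃ m : ℕ, m ≤ k ∧ x i = (m : ℝ) then ⟨h.choose, Nat.lt_succ_of_le h.choose_spec.1⟩
    else 0 with hφ
  have hval : ∀ x ∈ V, ∀ i, x i = ((φ x i : ℕ) : ℝ) := by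
    intro x hx i
    have h : ∃ m : ℕ, m ≤ k ∧ x i = (m : ℝ) := hlat x hx i
    rw [hφ]
    simp only [dif_pos h]
    exact h.choose_spec.2
  have hinj : Set.InjOn φ V := by
    intro x hx y hy hxy
    funext i
    rw [hval x hx i, hval y hy i, hxy]
  calc V.card ≤ (Finset.univ : Finset (Fin d → Fin (k + 1))).card := by
        apply Finset.card_le_card_of_injOn φ (fun x _ => Finset.mem_univ _) hinj
    _ = (k + 1) ^ d := by simp [Finset.card_univ]

lemma dist_le_card {d k : ℕ} {V : Finset (Fin d → ℝ)}
    (hlat : ∀ x ∈ V, ∀ i, ∃ m : ℕ, m ≤ k ∧ x i = (m : ℝ)) {u v : Fin d → ℝ}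
    (hu : u ∈ (convexHull ℝ (V : Set (Fin d → ℝ))).extremePoints ℝ) :
    (edgeGraph d (convexHull ℝ (V : Set (Fin d → ℝ)))).dist u v ≤ (k + 1) ^ d := by
  classical
  set G := edgeGraph d (convexHull ℝ (V : Set (Fin d → ℝ))) with hG
  by_cases hr : G.Reachable u v
  · obtain ⟨p⟩ := hr
    set q := p.toPath with hq
    have hdist : G.dist u v ≤ (q : G.Walk u v).length := SimpleGraph.dist_le _
    have hnodup : (q : G.Walk u v).support.Nodup := q.2.support_nodup
    have hsupp : ∀ w ∈ (q : G.Walk u v).support, w ∈ V := fun w hw =>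
      extremePoints_convexHull_subset (walk_support_extreme hu _ w hw)
    have hsub : (q : G.Walk u v).support.toFinset ⊆ V := by
      intro w hw
      exact hsupp w (List.mem_toFinset.1 hw)
    have hcard : (q : G.Walk u v).support.toFinset.card = (q : G.Walk u v).support.length :=
      List.toFinset_card_of_nodup hnodup
    have hlen : (q : G.Walk u v).support.length = (q : G.Walk u v).length + 1 :=
      SimpleGraph.Walk.length_support _
    have hVcard := card_lattice_le V hlat
    have := Finset.card_le_card hsub
    omega
  · rw [SimpleGraph.dist_eq_zero_of_not_reachable hr]
    exact Nat.zero_le _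


section Transfer
variable {d1 d2 : ℕ} (φ : (Fin d1 → ℝ) →ᵃ[ℝ] (Fin d2 → ℝ))
  (ψ : (Fin d2 → ℝ) →ᵃ[ℝ] (Fin d1 → ℝ)) (hψφ : ∀ x, ψ (φ x) = x)

include hψφ

lemma transfer_isExtreme {A B : Set (Fin d1 → ℝ)} (h : IsExtreme ℝ A B) :
    IsExtreme ℝ (φ '' A) (φ '' B) := by
  constructor
  · exact image_mono h.1
  · rintro x1 ⟨a1, ha1, rfl⟩ x2 ⟨a2, ha2, rfl⟩ w ⟨b, hb, rfl⟩ hopen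
    have hmem : ψ (φ b) ∈ ψ '' openSegment ℝ (φ a1) (φ a2) := mem_image_of_mem ψ hopen
    rw [image_openSegment] at hmem
    rw [hψφ, hψφ, hψφ] at hmem
    obtain ⟨h1, h2⟩ : _ ∧ _ := ⟨h.2 ha1 ha2 hb hmem, h.right_mem_of_mem_openSegment ha1 ha2 hb hmem⟩
    exact mem_image_of_mem φ h1

lemma transfer_extremePoints {A : Set (Fin d1 → ℝ)} {x : Fin d1 → ℝ}
    (hx : x ∈ A.extremePoints ℝ) : φ x ∈ (φ '' A).extremePoints ℝ := by
  refine ⟨mem_image_of_mem φ hx.1, ?_⟩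
  rintro y1 ⟨a1, ha1, rfl⟩ y2 ⟨a2, ha2, rfl⟩ hopen
  have hmem : ψ (φ x) ∈ ψ '' openSegment ℝ (φ a1) (φ a2) := mem_image_of_mem ψ hopen
  rw [image_openSegment] at hmem
  rw [hψφ, hψφ, hψφ] at hmem
  obtain ⟨h1, h2⟩ := (mem_extremePoints.1 hx).2 _ ha1 _ ha2 hmem
  rw [h1]

lemma transfer_extremePoints_rev {A : Set (Fin d1 → ℝ)} {x : Fin d1 → ℝ}
    (hx : φ x ∈ (φ '' A).extremePoints ℝ) (hxA : x ∈ A) : x ∈ A.extremePoints ℝ := by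
  refine ⟨hxA, ?_⟩
  intro a1 ha1 a2 ha2 hopen
  have hmem : φ x ∈ φ '' openSegment ℝ a1 a2 := mem_image_of_mem φ hopen
  rw [image_openSegment] at hmem
  obtain ⟨h1, h2⟩ := (mem_extremePoints.1 hx).2 _ (mem_image_of_mem φ ha1) _ (mem_image_of_mem φ ha2) hmem
  have hinj : Function.Injective φ := fun a b hab => by
    rw [← hψφ a, ← hψφ b, hab]
  exact hinj h1

lemma transfer_adj {A : Set (Fin d1 → ℝ)} {a b : Fin d1 → ℝ}
    (h : (edgeGraph d1 A).Adj a b) : (edgeGraph d2 (φ '' A)).Adj (φ a) (φ b) := by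
  have hinj : Function.Injective φ := fun a b hab => by
    rw [← hψφ a, ← hψφ b, hab]
  refine ⟨fun heq => h.1 (hinj heq), ?_⟩
  have := transfer_isExtreme φ ψ hψφ h.2
  rwa [image_segment] at this

/-- Transfer walks through `φ`. -/
noncomputable def transfer_hom {A : Set (Fin d1 → ℝ)} :
    (edgeGraph d1 A) →g (edgeGraph d2 (φ '' A)) where
  toFun := φ
  map_rel' := fun h => transfer_adj φ ψ hψφ h

end Transfer


noncomputable def insLin (n : ℕ) (i : Fin (n + 1)) : (Fin n → ℝ) →ₗ[ℝ] (Fin (n + 1) → ℝ) where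
  toFun w := i.insertNth 0 w
  map_add' a b := by
    funext j
    refine i.succAboveCases ?_ ?_ j
    · simp [Fin.insertNth_apply_same]
    · intro j'
      simp [Fin.insertNth_apply_succAbove]
  map_smul' c a := by
    funext j
    refine i.succAboveCases ?_ ?_ j
    · simp [Fin.insertNth_apply_same]
    · intro j'
      simp [Fin.insertNth_apply_succAbove]

noncomputable def sigmaAff (n : ℕ) (i : Fin (n + 1)) (M : ℝ) :
    (Fin n → ℝ) →ᵃ[ℝ] (Fin (n + 1) → ℝ) :=
  AffineMap.mk' (fun w => i.insertNth M w) (insLin n i) 0 (by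
    intro p
    funext j
    refine i.succAboveCases ?_ ?_ j
    · simp [insLin, Fin.insertNth_apply_same]
    · intro j'
      simp [insLin, Fin.insertNth_apply_succAbove,
        Pi.single_eq_of_ne (Fin.succAbove_ne i j')])

noncomputable def piAff (n : ℕ) (i : Fin (n + 1)) :
    (Fin (n + 1) → ℝ) →ᵃ[ℝ] (Fin n → ℝ) :=
  (LinearMap.funLeft ℝ ℝ i.succAbove).toAffineMap

lemma piAff_apply (n : ℕ) (i : Fin (n + 1)) (y : Fin (n + 1) → ℝ) (j : Fin n) :
    piAff n i y j = y (i.succAbove j) := rfl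

lemma sigmaAff_apply (n : ℕ) (i : Fin (n + 1)) (M : ℝ) (w : Fin n → ℝ) :
    sigmaAff n i M w = i.insertNth M w := rfl

lemma pi_sigma (n : ℕ) (i : Fin (n + 1)) (M : ℝ) : ∀ w, piAff n i (sigmaAff n i M w) = w := by
  intro w
  funext j
  rw [piAff_apply, sigmaAff_apply, Fin.insertNth_apply_succAbove]

lemma sigma_pi (n : ℕ) (i : Fin (n + 1)) (M : ℝ) {y : Fin (n + 1) → ℝ} (hy : y i = M) :
    sigmaAff n i M (piAff n i y) = y := by
  funext j
  rw [sigmaAff_apply]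
  refine i.succAboveCases ?_ ?_ j
  · rw [Fin.insertNth_apply_same, hy]
  · intro j'
    rw [Fin.insertNth_apply_succAbove, piAff_apply]

noncomputable def reflLin (d : ℕ) (i : Fin d) : (Fin d → ℝ) →ₗ[ℝ] (Fin d → ℝ) where
  toFun z := fun j => if j = i then -z j else z j
  map_add' a b := by
    funext j
    by_cases h : j = i <;> simp [h] <;> ring
  map_smul' c a := by
    funext j
    by_cases h : j = i <;> simp [h] <;> ring

noncomputable def reflAff (d : ℕ) (i : Fin d) (k : ℝ) : (Fin d → ℝ) →ᵃ[ℝ] (Fin d → ℝ) :=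
  AffineMap.mk' (fun z => fun j => if j = i then k - z j else z j) (reflLin d i) 0 (by
    intro p
    funext j
    by_cases h : j = i <;> simp [reflLin, h] <;> ring)

lemma reflAff_apply (d : ℕ) (i : Fin d) (k : ℝ) (z : Fin d → ℝ) (j : Fin d) :
    reflAff d i k z j = if j = i then k - z j else z j := rfl

lemma refl_refl (d : ℕ) (i : Fin d) (k : ℝ) : ∀ z, reflAff d i k (reflAff d i k z) = z := by
  intro z
  funext j
  rw [reflAff_apply, reflAff_apply]
  by_cases h : j = i <;> simp [h]


/-- Hom from the edge graph of an extreme subset into the edge graph of the whole set. -/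
noncomputable def extremeSub_hom {d : ℕ} {F P : Set (Fin d → ℝ)} (hFP : IsExtreme ℝ P F) :
    (edgeGraph d F) →g (edgeGraph d P) where
  toFun := id
  map_rel' := fun h => ⟨h.1, hFP.trans h.2⟩

set_option maxHeartbeats 1000000 in
lemma face_walk {n k : ℕ} (V : Finset (Fin (n + 1) → ℝ))
    (hlat : ∀ x ∈ V, ∀ j, ∃ m : ℕ, m ≤ k ∧ x j = (m : ℝ)) (i : Fin (n + 1)) {M : ℝ}
    (hM : ∀ y ∈ V, y i ≤ M) {z z' : Fin (n + 1) → ℝ}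
    (hz : z ∈ (convexHull ℝ (V : Set (Fin (n + 1) → ℝ))).extremePoints ℝ)
    (hz' : z' ∈ (convexHull ℝ (V : Set (Fin (n + 1) → ℝ))).extremePoints ℝ)
    (hzi : z i = M) (hz'i : z' i = M) :
    ∃ w : (edgeGraph (n + 1) (convexHull ℝ (V : Set (Fin (n + 1) → ℝ)))).Walk z z',
      w.length ≤ deltaLP n k := by
  classical
  set fi : (Fin (n + 1) → ℝ) →L[ℝ] ℝ := ContinuousLinearMap.proj i with hfi
  have hfiapp : ∀ y, fi y = y i := fun y => rfl
  have hMf : ∀ y ∈ V, fi y ≤ M := fun y hy => by rw [hfiapp]; exact hM y hy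
  set TF : Finset (Fin (n + 1) → ℝ) := V.filter (fun y => fi y = M) with hTF
  have hface : {w ∈ convexHull ℝ (V : Set (Fin (n + 1) → ℝ)) | fi w = M} =
      convexHull ℝ (TF : Set (Fin (n + 1) → ℝ)) := face_hull_eq hMf
  have hFext : IsExtreme ℝ (convexHull ℝ (V : Set (Fin (n + 1) → ℝ)))
      (convexHull ℝ (TF : Set (Fin (n + 1) → ℝ))) := hface ▸ face_isExtreme hMf
  have hzV : z ∈ V := extremePoints_convexHull_subset hz
  have hz'V : z' ∈ V := extremePoints_convexHull_subset hz'
  have hzTF : z ∈ TF := Finset.mem_filter.2 ⟨hzV, by rw [hfiapp]; exact hzi⟩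
  have hz'TF : z' ∈ TF := Finset.mem_filter.2 ⟨hz'V, by rw [hfiapp]; exact hz'i⟩
  have hzF : z ∈ convexHull ℝ (TF : Set (Fin (n + 1) → ℝ)) :=
    subset_convexHull ℝ _ (Finset.mem_coe.2 hzTF)
  have hz'F : z' ∈ convexHull ℝ (TF : Set (Fin (n + 1) → ℝ)) :=
    subset_convexHull ℝ _ (Finset.mem_coe.2 hz'TF)
  have hzEF : z ∈ (convexHull ℝ (TF : Set (Fin (n + 1) → ℝ))).extremePoints ℝ :=
    mem_extremePoints_mono' hFext.1 hz hzF
  have hz'EF : z' ∈ (convexHull ℝ (TF : Set (Fin (n + 1) → ℝ))).extremePoints ℝ :=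
    mem_extremePoints_mono' hFext.1 hz' hz'F
  set σ := sigmaAff n i M with hσ
  set π := piAff n i with hπ
  set V' : Finset (Fin n → ℝ) := TF.image π with hV'
  have hTFM : ∀ y ∈ TF, y i = M := fun y hy => (Finset.mem_filter.1 hy).2
  have hσπTF : ∀ y ∈ TF, σ (π y) = y := fun y hy => sigma_pi n i M (hTFM y hy)
  have hV'coe : (V' : Set (Fin n → ℝ)) = π '' (TF : Set (Fin (n + 1) → ℝ)) :=
    Finset.coe_image
  have hkey : σ '' (convexHull ℝ (V' : Set (Fin n → ℝ))) =
      convexHull ℝ (TF : Set (Fin (n + 1) → ℝ)) := by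
    rw [AffineMap.image_convexHull, hV'coe, ← Set.image_comp]
    have himg : (⇑σ ∘ ⇑π) '' (TF : Set (Fin (n + 1) → ℝ)) = id '' (TF : Set (Fin (n + 1) → ℝ)) :=
      Set.image_congr (fun y hy => hσπTF y hy)
    rw [himg, Set.image_id]
  have hπσ : ∀ w, π (σ w) = w := pi_sigma n i M
  -- extreme points downstairs
  have hπz : π z ∈ ((convexHull ℝ (V' : Set (Fin n → ℝ)))).extremePoints ℝ := by
    apply transfer_extremePoints_rev σ π hπσ
    · rw [hkey, hσπTF z hzTF]
      exact hzEF
    · exact subset_convexHull ℝ _ (Finset.mem_coe.2 (Finset.mem_image_of_mem π hzTF))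
  have hπz' : π z' ∈ ((convexHull ℝ (V' : Set (Fin n → ℝ)))).extremePoints ℝ := by
    apply transfer_extremePoints_rev σ π hπσ
    · rw [hkey, hσπTF z' hz'TF]
      exact hz'EF
    · exact subset_convexHull ℝ _ (Finset.mem_coe.2 (Finset.mem_image_of_mem π hz'TF))
  -- lattice property downstairs
  have hlat' : ∀ x ∈ V', ∀ j, ∃ m : ℕ, m ≤ k ∧ x j = (m : ℝ) := by
    intro x hx j
    obtain ⟨y, hy, rfl⟩ := Finset.mem_image.1 hx
    rw [piAff_apply]
    exact hlat y (Finset.mem_filter.1 hy).1 _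
  -- reachability downstairs
  obtain ⟨g, hg⟩ := exists_exposing hπz'
  obtain ⟨wp⟩ := walk_to_exposed g hπz' hg (π z) hπz
  have hreach : (edgeGraph n (convexHull ℝ (V' : Set (Fin n → ℝ)))).Reachable (π z) (π z') :=
    ⟨wp⟩
  -- distance bound downstairs
  have hbdd : ∀ m ∈ {m : ℕ | ∃ u ∈ (convexHull ℝ (V' : Set (Fin n → ℝ))).extremePoints ℝ,
      ∃ v ∈ (convexHull ℝ (V' : Set (Fin n → ℝ))).extremePoints ℝ,
      (edgeGraph n (convexHull ℝ (V' : Set (Fin n → ℝ)))).dist u v = m}, m ≤ (k + 1) ^ n := by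
    rintro m ⟨u, hu, v, hv, rfl⟩
    exact dist_le_card hlat' hu
  have hd1 : (edgeGraph n (convexHull ℝ (V' : Set (Fin n → ℝ)))).dist (π z) (π z') ≤
      polyDiam n (convexHull ℝ (V' : Set (Fin n → ℝ))) := by
    apply le_csSup ⟨(k + 1) ^ n, fun m hm => hbdd m hm⟩
    exact ⟨π z, hπz, π z', hπz', rfl⟩
  have hV'ne : V'.Nonempty := ⟨π z, Finset.mem_image_of_mem π hzTF⟩
  have hd2 : polyDiam n (convexHull ℝ (V' : Set (Fin n → ℝ))) ≤ deltaLP n k := by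
    apply le_csSup
    · refine ⟨(k + 1) ^ n, ?_⟩
      rintro m ⟨P'', ⟨V'', hne'', hlat'', rfl⟩, rfl⟩
      by_cases hne : {m : ℕ | ∃ u ∈ (convexHull ℝ (V'' : Set (Fin n → ℝ))).extremePoints ℝ,
          ∃ v ∈ (convexHull ℝ (V'' : Set (Fin n → ℝ))).extremePoints ℝ,
          (edgeGraph n (convexHull ℝ (V'' : Set (Fin n → ℝ)))).dist u v = m}.Nonempty
      · apply csSup_le hne
        rintro m ⟨u, hu, v, hv, rfl⟩
        exact dist_le_card hlat'' hu
      · rw [Set.not_nonempty_iff_eq_empty] at hne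
        unfold polyDiam
        rw [hne, csSup_empty]
        exact Nat.zero_le _
    · exact ⟨convexHull ℝ (V' : Set (Fin n → ℝ)), ⟨V', hV'ne, hlat', rfl⟩, rfl⟩
  obtain ⟨p, hp⟩ := hreach.exists_walk_length_eq_dist
  -- map the walk upstairs
  set hom1 := transfer_hom σ π hπσ (A := convexHull ℝ (V' : Set (Fin n → ℝ)))
  have hAdj2 : ∀ {a b : Fin (n + 1) → ℝ},
      (edgeGraph (n + 1) (σ '' (convexHull ℝ (V' : Set (Fin n → ℝ))))).Adj a b →
      (edgeGraph (n + 1) (convexHull ℝ (V : Set (Fin (n + 1) → ℝ)))).Adj a b := by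
    intro a b h
    exact ⟨h.1, hFext.trans (hkey ▸ h.2)⟩
  let hom2 : (edgeGraph (n + 1) (σ '' (convexHull ℝ (V' : Set (Fin n → ℝ))))) →g
      (edgeGraph (n + 1) (convexHull ℝ (V : Set (Fin (n + 1) → ℝ)))) :=
    ⟨fun x => x, fun h => hAdj2 h⟩
  have hend1 : hom2 (hom1 (π z)) = z := hσπTF z hzTF
  have hend2 : hom2 (hom1 (π z')) = z' := hσπTF z' hz'TF
  refine ⟨((p.map hom1).map hom2).copy hend1 hend2, ?_⟩
  rw [SimpleGraph.Walk.length_copy, SimpleGraph.Walk.length_map,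
    SimpleGraph.Walk.length_map, hp]
  exact le_trans hd1 hd2


lemma nomax_walk {n k : ℕ} (V : Finset (Fin (n + 1) → ℝ)) (hVne : V.Nonempty)
    (hlat : ∀ x ∈ V, ∀ j, ∃ m : ℕ, m ≤ k ∧ x j = (m : ℝ)) (j : Fin (n + 1))
    {x y : Fin (n + 1) → ℝ}
    (hx : x ∈ (convexHull ℝ (V : Set (Fin (n + 1) → ℝ))).extremePoints ℝ)
    (hy : y ∈ (convexHull ℝ (V : Set (Fin (n + 1) → ℝ))).extremePoints ℝ)
    (Nx Ny : ℕ) (hNx : ∀ z ∈ V, z j - x j ≤ (Nx : ℝ)) (hNy : ∀ z ∈ V, z j - y j ≤ (Ny : ℝ)) :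
    ∃ w : (edgeGraph (n + 1) (convexHull ℝ (V : Set (Fin (n + 1) → ℝ)))).Walk x y,
      w.length ≤ Nx + deltaLP n k + Ny := by
  classical
  set M : ℝ := (V.image (fun z => z j)).max' (hVne.image _) with hMdef
  have hM : ∀ z ∈ V, z j ≤ M := by
    intro z hz
    exact Finset.le_max' (V.image (fun w => w j)) (z j)
      (Finset.mem_image_of_mem (fun w => w j) hz)
  have hMmem : ∃ z ∈ V, z j = M := by
    have := (V.image (fun z => z j)).max'_mem (hVne.image _)
    rw [← hMdef] at this
    obtain ⟨z0, hz0, hz0eq⟩ := Finset.mem_image.1 this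
    exact ⟨z0, hz0, hz0eq⟩
  obtain ⟨z0, hz0V, hz0M⟩ := hMmem
  have hlatj : ∀ z ∈ V, ∃ m : ℕ, m ≤ k ∧ z j = (m : ℝ) := fun z hz => hlat z hz j
  have hMx : M - x j ≤ (Nx : ℝ) := by
    have := hNx z0 hz0V
    rw [hz0M] at this
    exact this
  have hMy : M - y j ≤ (Ny : ℝ) := by
    have := hNy z0 hz0V
    rw [hz0M] at this
    exact this
  obtain ⟨z, hzEP, hzM, w1, hw1⟩ :=
    walk_up j hlatj hM ⟨z0, hz0V, hz0M⟩ Nx x hx hMx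
  obtain ⟨z', hz'EP, hz'M, w2, hw2⟩ :=
    walk_up j hlatj hM ⟨z0, hz0V, hz0M⟩ Ny y hy hMy
  obtain ⟨w3, hw3⟩ := face_walk V hlat j hM hzEP hz'EP hzM hz'M
  refine ⟨w1.append (w3.append w2.reverse), ?_⟩
  rw [SimpleGraph.Walk.length_append, SimpleGraph.Walk.length_append,
    SimpleGraph.Walk.length_reverse]
  have h1 : w1.length ≤ Nx := by
    have : (w1.length : ℝ) ≤ (Nx : ℝ) := le_trans hw1 hMx
    exact_mod_cast this
  have h2 : w2.length ≤ Ny := by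
    have : (w2.length : ℝ) ≤ (Ny : ℝ) := le_trans hw2 hMy
    exact_mod_cast this
  omega

set_option maxHeartbeats 1000000 in
lemma main_contra {n k : ℕ} (V : Finset (Fin (n + 1) → ℝ)) (hVne : V.Nonempty)
    (hlat : ∀ x ∈ V, ∀ j, ∃ m : ℕ, m ≤ k ∧ x j = (m : ℝ))
    {u v b : Fin (n + 1) → ℝ}
    (hu : u ∈ (convexHull ℝ (V : Set (Fin (n + 1) → ℝ))).extremePoints ℝ)
    (hv : v ∈ (convexHull ℝ (V : Set (Fin (n + 1) → ℝ))).extremePoints ℝ)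
    (hadj : (edgeGraph (n + 1) (convexHull ℝ (V : Set (Fin (n + 1) → ℝ)))).Adj u b)
    (j : Fin (n + 1)) (hjump : u j + 2 ≤ b j)
    (hge : deltaLP n k + k ≤
      (edgeGraph (n + 1) (convexHull ℝ (V : Set (Fin (n + 1) → ℝ)))).dist u v) :
    False := by
  classical
  have hb : b ∈ (convexHull ℝ (V : Set (Fin (n + 1) → ℝ))).extremePoints ℝ :=
    adj_right_extreme hadj
  have huV : u ∈ V := extremePoints_convexHull_subset hu
  have hvV : v ∈ V := extremePoints_convexHull_subset hv
  have hbV : b ∈ V := extremePoints_convexHull_subset hb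
  obtain ⟨mu, hmuk, hmu⟩ := hlat u huV j
  obtain ⟨mv, hmvk, hmv⟩ := hlat v hvV j
  obtain ⟨mb, hmbk, hmb⟩ := hlat b hbV j
  have hjump' : mu + 2 ≤ mb := by
    have : (mu : ℝ) + 2 ≤ (mb : ℝ) := by rw [← hmu, ← hmb]; exact hjump
    exact_mod_cast this
  -- bound 1: go up from b and from v to the max face
  have hcoordk : ∀ z ∈ V, z j ≤ (k : ℝ) := by
    intro z hz
    obtain ⟨m, hmk, hm⟩ := hlat z hz j
    rw [hm]
    exact_mod_cast hmk
  have hNb : ∀ z ∈ V, z j - b j ≤ ((k - mb : ℕ) : ℝ) := by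
    intro z hz
    rw [hmb]
    push_cast [Nat.cast_sub hmbk]
    linarith [hcoordk z hz]
  have hNv : ∀ z ∈ V, z j - v j ≤ ((k - mv : ℕ) : ℝ) := by
    intro z hz
    rw [hmv]
    push_cast [Nat.cast_sub hmvk]
    linarith [hcoordk z hz]
  obtain ⟨wb, hwb⟩ := nomax_walk V hVne hlat j hb hv (k - mb) (k - mv) hNb hNv
  have hbound1 : (edgeGraph (n + 1) (convexHull ℝ (V : Set (Fin (n + 1) → ℝ)))).dist u v ≤
      1 + ((k - mb) + deltaLP n k + (k - mv)) := by
    have := SimpleGraph.dist_le (SimpleGraph.Walk.cons hadj wb)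
    rw [SimpleGraph.Walk.length_cons] at this
    omega
  -- bound 2: reflected polytope
  set ρ := reflAff (n + 1) j (k : ℝ) with hρ
  have hρρ := refl_refl (n + 1) j (k : ℝ)
  set Vr : Finset (Fin (n + 1) → ℝ) := V.image ρ with hVr
  have hVrcoe : (Vr : Set (Fin (n + 1) → ℝ)) = ρ '' (V : Set (Fin (n + 1) → ℝ)) :=
    Finset.coe_image
  have hhull : ρ '' (convexHull ℝ (V : Set (Fin (n + 1) → ℝ))) =
      convexHull ℝ (Vr : Set (Fin (n + 1) → ℝ)) := by
    rw [AffineMap.image_convexHull, hVrcoe]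
  have hlatr : ∀ x ∈ Vr, ∀ j', ∃ m : ℕ, m ≤ k ∧ x j' = (m : ℝ) := by
    intro x hx j'
    obtain ⟨z, hz, rfl⟩ := Finset.mem_image.1 hx
    obtain ⟨m, hmk, hm⟩ := hlat z hz j'
    by_cases hjj : j' = j
    · refine ⟨k - m, Nat.sub_le _ _, ?_⟩
      rw [reflAff_apply, if_pos hjj]
      subst hjj
      rw [hm]
      push_cast [Nat.cast_sub hmk]
      ring
    · exact ⟨m, hmk, by rw [reflAff_apply, if_neg hjj]; exact hm⟩
  have hur : ρ u ∈ (convexHull ℝ (Vr : Set (Fin (n + 1) → ℝ))).extremePoints ℝ := by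
    rw [← hhull]
    exact transfer_extremePoints ρ ρ hρρ hu
  have hvr : ρ v ∈ (convexHull ℝ (Vr : Set (Fin (n + 1) → ℝ))).extremePoints ℝ := by
    rw [← hhull]
    exact transfer_extremePoints ρ ρ hρρ hv
  have hVrne : Vr.Nonempty := hVne.image ρ
  -- coordinates on the reflected side
  have hρuj : ρ u j = (k : ℝ) - u j := by rw [reflAff_apply, if_pos rfl]
  have hρvj : ρ v j = (k : ℝ) - v j := by rw [reflAff_apply, if_pos rfl]
  have hcoord0 : ∀ z ∈ V, 0 ≤ z j := by
    intro z hz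
    obtain ⟨m, _, hm⟩ := hlat z hz j
    rw [hm]
    positivity
  have hNur : ∀ z ∈ Vr, z j - ρ u j ≤ ((mu : ℕ) : ℝ) := by
    intro z hz
    obtain ⟨z0, hz0, rfl⟩ := Finset.mem_image.1 hz
    rw [reflAff_apply, if_pos rfl, hρuj, hmu]
    have := hcoord0 z0 hz0
    linarith
  have hNvr : ∀ z ∈ Vr, z j - ρ v j ≤ ((mv : ℕ) : ℝ) := by
    intro z hz
    obtain ⟨z0, hz0, rfl⟩ := Finset.mem_image.1 hz
    rw [reflAff_apply, if_pos rfl, hρvj, hmv]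
    have := hcoord0 z0 hz0
    linarith
  obtain ⟨wr, hwr⟩ := nomax_walk Vr hVrne hlatr j hur hvr mu mv hNur hNvr
  -- map the reflected walk back
  have hback : ρ '' (convexHull ℝ (Vr : Set (Fin (n + 1) → ℝ))) =
      convexHull ℝ (V : Set (Fin (n + 1) → ℝ)) := by
    rw [AffineMap.image_convexHull, hVrcoe, ← Set.image_comp]
    have himg : (⇑ρ ∘ ⇑ρ) '' (V : Set (Fin (n + 1) → ℝ)) =
        id '' (V : Set (Fin (n + 1) → ℝ)) := Set.image_congr (fun z _ => hρρ z)
    rw [himg, Set.image_id]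
  have hAdjback : ∀ {a b' : Fin (n + 1) → ℝ},
      (edgeGraph (n + 1) (convexHull ℝ (Vr : Set (Fin (n + 1) → ℝ)))).Adj a b' →
      (edgeGraph (n + 1) (convexHull ℝ (V : Set (Fin (n + 1) → ℝ)))).Adj (ρ a) (ρ b') := by
    intro a b' h
    have := transfer_adj ρ ρ hρρ h
    rwa [hback] at this
  let homB : (edgeGraph (n + 1) (convexHull ℝ (Vr : Set (Fin (n + 1) → ℝ)))) →g
      (edgeGraph (n + 1) (convexHull ℝ (V : Set (Fin (n + 1) → ℝ)))) :=
    ⟨fun x => ρ x, fun h => hAdjback h⟩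
  have hend1 : homB (ρ u) = u := hρρ u
  have hend2 : homB (ρ v) = v := hρρ v
  have hbound2 : (edgeGraph (n + 1) (convexHull ℝ (V : Set (Fin (n + 1) → ℝ)))).dist u v ≤
      mu + deltaLP n k + mv := by
    have := SimpleGraph.dist_le ((wr.map homB).copy hend1 hend2)
    rw [SimpleGraph.Walk.length_copy, SimpleGraph.Walk.length_map] at this
    omega
  omega


set_option maxHeartbeats 1000000 in
theorem cond2_edges_pm1 (d k : ℕ) (hd : 3 ≤ d)
    (P : Set (Fin d → ℝ)) (hP : IsLatticePolytope d k P)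
    (u v : Fin d → ℝ) (hu : u ∈ P.extremePoints ℝ) (hv : v ∈ P.extremePoints ℝ)
    (hdist : (edgeGraph d P).dist u v = deltaLP (d - 1) k + k) :
    ∀ a b : Fin d → ℝ, (edgeGraph d P).Adj a b → (a = u ∨ a = v) →
      ∃ w : Fin d → ℤ, (∀ i, w i = -1 ∨ w i = 0 ∨ w i = 1) ∧
        ∃ c : ℝ, 0 < c ∧ ∀ i, b i - a i = c * (w i : ℝ) := by
  classical
  intro a b hadj haeq
  obtain ⟨n, rfl⟩ : ∃ n, d = n + 1 := ⟨d - 1, by omega⟩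
  rw [Nat.add_sub_cancel] at hdist
  obtain ⟨V, hVne, hlat, rfl⟩ := hP
  have haE := adj_left_extreme hadj
  have hbE := adj_right_extreme hadj
  have haV : a ∈ V := extremePoints_convexHull_subset haE
  have hbV : b ∈ V := extremePoints_convexHull_subset hbE
  choose ma hmak hma using fun j => hlat a haV j
  choose mb hmbk hmb using fun j => hlat b hbV j
  by_cases hsmall : ∀ i, (ma i : ℤ) - 1 ≤ mb i ∧ (mb i : ℤ) ≤ ma i + 1
  · refine ⟨fun i => (mb i : ℤ) - ma i, ?_, 1, one_pos, ?_⟩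
    · intro i
      have := hsmall i
      show (mb i : ℤ) - ma i = -1 ∨ (mb i : ℤ) - ma i = 0 ∨ (mb i : ℤ) - ma i = 1
      omega
    · intro i
      rw [one_mul, hma i, hmb i]
      push_cast
      ring
  · exfalso
    push_neg at hsmall
    obtain ⟨i, hi⟩ := hsmall
    -- set up the distance pair with `a` as the first endpoint
    set v' : Fin (n + 1) → ℝ := if a = u then v else u with hv'
    have hv'E : v' ∈ (convexHull ℝ (V : Set (Fin (n + 1) → ℝ))).extremePoints ℝ := by
      rw [hv']
      split
      · exact hv
      · exact hu
    have hdist' : (edgeGraph (n + 1) (convexHull ℝ (V : Set (Fin (n + 1) → ℝ)))).dist a v' =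
        deltaLP n k + k := by
      rw [hv']
      rcases haeq with h | h
      · rw [if_pos h, h]; exact hdist
      · have hane : ¬ a = u ∨ True := Or.inr trivial
        by_cases hau : a = u
        · rw [if_pos hau, hau]; exact hdist
        · rw [if_neg hau, h, SimpleGraph.dist_comm]; exact hdist
    have hjumpcase : ma i + 2 ≤ mb i ∨ mb i + 2 ≤ ma i := by
      by_cases hle : (ma i : ℤ) - 1 ≤ mb i
      · have := hi hle
        omega
      · omega
    rcases hjumpcase with hup | hdown
    · -- upward jump
      have hjump : a i + 2 ≤ b i := by
        rw [hma i, hmb i]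
        have : (ma i : ℝ) + 2 ≤ (mb i : ℝ) := by exact_mod_cast hup
        linarith
      exact main_contra V hVne hlat haE hv'E hadj i hjump (le_of_eq hdist'.symm)
    · -- downward jump: reflect
      have hk2 : 2 ≤ k := by
        have := hmak i
        omega
      set ρ := reflAff (n + 1) i (k : ℝ) with hρ
      have hρρ := refl_refl (n + 1) i (k : ℝ)
      set Vr : Finset (Fin (n + 1) → ℝ) := V.image ρ with hVr
      have hVrcoe : (Vr : Set (Fin (n + 1) → ℝ)) = ρ '' (V : Set (Fin (n + 1) → ℝ)) :=
        Finset.coe_image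
      have hhull : ρ '' (convexHull ℝ (V : Set (Fin (n + 1) → ℝ))) =
          convexHull ℝ (Vr : Set (Fin (n + 1) → ℝ)) := by
        rw [AffineMap.image_convexHull, hVrcoe]
      have hback : ρ '' (convexHull ℝ (Vr : Set (Fin (n + 1) → ℝ))) =
          convexHull ℝ (V : Set (Fin (n + 1) → ℝ)) := by
        rw [AffineMap.image_convexHull, hVrcoe, ← Set.image_comp]
        have himg : (⇑ρ ∘ ⇑ρ) '' (V : Set (Fin (n + 1) → ℝ)) =
            id '' (V : Set (Fin (n + 1) → ℝ)) := Set.image_congr (fun z _ => hρρ z)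
        rw [himg, Set.image_id]
      have hVrne : Vr.Nonempty := hVne.image ρ
      have hlatr : ∀ x ∈ Vr, ∀ j', ∃ m : ℕ, m ≤ k ∧ x j' = (m : ℝ) := by
        intro x hx j'
        obtain ⟨z, hz, rfl⟩ := Finset.mem_image.1 hx
        obtain ⟨m, hmk', hm⟩ := hlat z hz j'
        by_cases hjj : j' = i
        · refine ⟨k - m, Nat.sub_le _ _, ?_⟩
          rw [reflAff_apply, if_pos hjj]
          subst hjj
          rw [hm]
          push_cast [Nat.cast_sub hmk']
          ring
        · exact ⟨m, hmk', by rw [reflAff_apply, if_neg hjj]; exact hm⟩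
      have haEr : ρ a ∈ (convexHull ℝ (Vr : Set (Fin (n + 1) → ℝ))).extremePoints ℝ := by
        rw [← hhull]; exact transfer_extremePoints ρ ρ hρρ haE
      have hv'Er : ρ v' ∈ (convexHull ℝ (Vr : Set (Fin (n + 1) → ℝ))).extremePoints ℝ := by
        rw [← hhull]; exact transfer_extremePoints ρ ρ hρρ hv'E
      have hadjr : (edgeGraph (n + 1) (convexHull ℝ (Vr : Set (Fin (n + 1) → ℝ)))).Adj
          (ρ a) (ρ b) := by
        have := transfer_adj ρ ρ hρρ hadj
        rwa [hhull] at this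
      -- jump upward on the reflected side
      have hjumpr : ρ a i + 2 ≤ ρ b i := by
        rw [reflAff_apply, if_pos rfl, reflAff_apply, if_pos rfl, hma i, hmb i]
        have : (mb i : ℝ) + 2 ≤ (ma i : ℝ) := by exact_mod_cast hdown
        linarith
      -- reflected distance is at least deltaLP n k + k
      have hdpos : (edgeGraph (n + 1) (convexHull ℝ (V : Set (Fin (n + 1) → ℝ)))).dist a v' ≠ 0 := by
        rw [hdist']
        omega
      have hreach := SimpleGraph.Reachable.of_dist_ne_zero hdpos
      obtain ⟨p, hp⟩ := hreach.exists_walk_length_eq_dist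
      have hAdjF : ∀ {x y : Fin (n + 1) → ℝ},
          (edgeGraph (n + 1) (convexHull ℝ (V : Set (Fin (n + 1) → ℝ)))).Adj x y →
          (edgeGraph (n + 1) (convexHull ℝ (Vr : Set (Fin (n + 1) → ℝ)))).Adj (ρ x) (ρ y) := by
        intro x y h
        have := transfer_adj ρ ρ hρρ h
        rwa [hhull] at this
      let homF : (edgeGraph (n + 1) (convexHull ℝ (V : Set (Fin (n + 1) → ℝ)))) →g
          (edgeGraph (n + 1) (convexHull ℝ (Vr : Set (Fin (n + 1) → ℝ)))) :=
        ⟨fun x => ρ x, fun h => hAdjF h⟩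
      have hAdjB : ∀ {x y : Fin (n + 1) → ℝ},
          (edgeGraph (n + 1) (convexHull ℝ (Vr : Set (Fin (n + 1) → ℝ)))).Adj x y →
          (edgeGraph (n + 1) (convexHull ℝ (V : Set (Fin (n + 1) → ℝ)))).Adj (ρ x) (ρ y) := by
        intro x y h
        have := transfer_adj ρ ρ hρρ h
        rwa [hback] at this
      let homB : (edgeGraph (n + 1) (convexHull ℝ (Vr : Set (Fin (n + 1) → ℝ)))) →g
          (edgeGraph (n + 1) (convexHull ℝ (V : Set (Fin (n + 1) → ℝ)))) :=
        ⟨fun x => ρ x, fun h => hAdjB h⟩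
      have hreachr : (edgeGraph (n + 1)
          (convexHull ℝ (Vr : Set (Fin (n + 1) → ℝ)))).Reachable (ρ a) (ρ v') :=
        ⟨p.map homF⟩
      obtain ⟨q, hq⟩ := hreachr.exists_walk_length_eq_dist
      have hger : deltaLP n k + k ≤ (edgeGraph (n + 1)
          (convexHull ℝ (Vr : Set (Fin (n + 1) → ℝ)))).dist (ρ a) (ρ v') := by
        have hmapped := SimpleGraph.dist_le ((q.map homB).copy (hρρ a) (hρρ v'))
        rw [SimpleGraph.Walk.length_copy, SimpleGraph.Walk.length_map, hq] at hmapped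
        rw [hdist'] at hmapped
        exact hmapped
      exact main_contra Vr hVrne hlatr haEr hv'Er hadjr i hjumpr hger
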